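/- Let (aₙ) be an unbounded nondecreasing sequence of positive integers and let α = 0^{a₀} 1^{a₁} 0^{a₂} 1^{a₃} ⋯. Then the quasi-isometry class of α is minimal in the partial order of quasi-isometry types: for every string β over {0,1}, if β ≤_QI α then also α ≤_QI β. -/
import Mathlib


private def ubmS (a : ℕ → ℕ) (k : ℕ) : ℕ := (Finset.range k).sum a

private lemma ubmS_succ (a : ℕ → ℕ) (k : ℕ) : ubmS a (k+1) = ubmS a k + a k :=
  Finset.sum_range_succ a k

private lemma le_ubmS (a : ℕ → ℕ) (hpos : ∀ n, 0 < a n) (k : ℕ) : k ≤ ubmS a k := by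
  induction k with
  | zero => simp [ubmS]
  | succ n ih => rw [ubmS_succ]; have := hpos n; omega

private lemma ubmS_mono (a : ℕ → ℕ) : Monotone (ubmS a) := by
  intro i j hij
  exact Finset.sum_le_sum_of_subset (Finset.range_subset_range.2 hij)

private def ubmBlk (a : ℕ → ℕ) (i : ℕ) : ℕ := Nat.findGreatest (fun k => ubmS a k ≤ i) i

private lemma ubmBlk_spec (a : ℕ → ℕ) (hpos : ∀ n, 0 < a n) (i : ℕ) :
    ubmS a (ubmBlk a i) ≤ i ∧ i < ubmS a (ubmBlk a i + 1) := by
  constructor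
  · exact Nat.findGreatest_spec (P := fun k => ubmS a k ≤ i) (n := i) (m := 0) (Nat.zero_le i) (by simp [ubmS])
  · by_contra hcon
    push_neg at hcon
    have h1 : ubmBlk a i + 1 ≤ i := le_trans (le_ubmS a hpos _) hcon
    have h2 : ubmBlk a i + 1 ≤ ubmBlk a i := Nat.le_findGreatest h1 hcon
    omega

private lemma ubmBlk_eq (a : ℕ → ℕ) (hpos : ∀ n, 0 < a n) {i k : ℕ}
    (h1 : ubmS a k ≤ i) (h2 : i < ubmS a (k+1)) : ubmBlk a i = k := by
  obtain ⟨hs1, hs2⟩ := ubmBlk_spec a hpos i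
  rcases lt_trichotomy (ubmBlk a i) k with hlt | he | hgt
  · have hm := ubmS_mono a (show ubmBlk a i + 1 ≤ k from hlt)
    omega
  · exact he
  · have hm := ubmS_mono a (show k + 1 ≤ ubmBlk a i from hgt)
    omega


def IsQI {Γ : Type*} (α β : ℕ → Γ) (f : ℕ → ℕ) (A B : ℝ) : Prop :=
  1 ≤ A ∧ 0 ≤ B ∧ (∀ n, α n = β (f n)) ∧
  (∀ x y : ℕ, (1 / A) * |(x : ℝ) - (y : ℝ)| - B ≤ |(f x : ℝ) - (f y : ℝ)| ∧
      |(f x : ℝ) - (f y : ℝ)| ≤ A * |(x : ℝ) - (y : ℝ)| + B) ∧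
  (∀ m : ℕ, ∃ x : ℕ, |(m : ℝ) - (f x : ℝ)| ≤ A)

/-- `α ≤_QI β`: there is a quasi-isometry from `α` to `β`. -/
def QI {Γ : Type*} (α β : ℕ → Γ) : Prop := ∃ f A B, IsQI α β f A B

open scoped Classical

/-- Let `(aₙ)` be an unbounded nondecreasing sequence of positive integers and let
`α = 0^{a₀} 1^{a₁} 0^{a₂} 1^{a₃} ⋯` (position `i` is coloured `0` iff its block index
is even). Then `[α]` is minimal: any `β` with `β ≤_QI α` also satisfies `α ≤_QI β`. -/
theorem unbounded_blocks_minimal (a : ℕ → ℕ) (hpos : ∀ n, 0 < a n) (hmono : Monotone a)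
    (hunb : ∀ N, ∃ n, N < a n) (α : ℕ → Fin 2)
    (hα : ∀ i, α i = if ∃ k ≤ i, k % 2 = 0 ∧ (Finset.range k).sum a ≤ i ∧
        i < (Finset.range (k + 1)).sum a then 0 else 1)
    (β : ℕ → Fin 2) (h : QI β α) : QI α β := by
  obtain ⟨f, A, B, hA, hB, hcol, hqi, hsurj⟩ := h
  have hApos : (0:ℝ) < A := lt_of_lt_of_le one_pos hA
  set L : ℕ := ⌈A⌉₊ with hLdef
  have hAL : A ≤ (L : ℝ) := Nat.le_ceil A
  have hL0 : (0:ℝ) ≤ (L:ℝ) := Nat.cast_nonneg L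
  obtain ⟨N₀, hN₀⟩ := hunb (2 * L + 3)
  have hlen : ∀ k, N₀ ≤ k → 2 * L + 3 < a k := fun k hk => lt_of_lt_of_le hN₀ (hmono hk)
  -- colour is determined by block parity
  have hcolor : ∀ i, α i = if ubmBlk a i % 2 = 0 then (0:Fin 2) else 1 := by
    intro i
    rw [hα i]
    obtain ⟨hs1, hs2⟩ := ubmBlk_spec a hpos i
    by_cases hp : ubmBlk a i % 2 = 0
    · rw [if_pos hp, if_pos]
      exact ⟨ubmBlk a i, le_trans (le_ubmS a hpos _) hs1, hp, hs1, hs2⟩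
    · rw [if_neg hp, if_neg]
      rintro ⟨k, hk, hk2, hk3, hk4⟩
      exact hp (ubmBlk_eq a hpos hk3 hk4 ▸ hk2)
  have hfin2 : ∀ u v w : Fin 2, u ≠ v → w = u ∨ w = v := by decide
  -- nat bounds from the surjectivity estimate
  have hnear : ∀ q x : ℕ, |(q:ℝ) - (f x:ℝ)| ≤ A → f x ≤ q + L ∧ q ≤ f x + L := by
    intro q x hx
    have hx' := abs_le.mp (hx.trans hAL)
    constructor
    · have hh : (f x : ℝ) ≤ ((q + L : ℕ) : ℝ) := by push_cast; linarith [hx'.1]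
      exact_mod_cast hh
    · have hh : (q : ℝ) ≤ ((f x + L : ℕ) : ℝ) := by push_cast; linarith [hx'.2]
      exact_mod_cast hh
  -- points whose image lands deep inside block k get the right colour
  have hdeep : ∀ q k x : ℕ, ubmS a k + L + 1 ≤ q → q + (L + 1) ≤ ubmS a (k+1) →
      |(q:ℝ) - (f x:ℝ)| ≤ A → ubmBlk a (f x) = k := by
    intro q k x h1 h2 hx
    obtain ⟨hub, hlb⟩ := hnear q x hx
    exact ubmBlk_eq a hpos (by omega) (by omega)
  set C : ℝ := (ubmS a (N₀ + 2) : ℝ) + 2 * L + 2 with hCdef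
  have hC0 : (0:ℝ) ≤ C := by positivity
  have hS20 : (0:ℝ) ≤ (ubmS a (N₀+2) : ℝ) := Nat.cast_nonneg _
  -- key: every position of α has, within bounded distance of it, a point in the image
  -- of f with the same colour
  have hkey : ∀ m : ℕ, ∃ x : ℕ, α (f x) = α m ∧ |(f x : ℝ) - (m : ℝ)| ≤ C := by
    intro m
    by_cases hm : m < ubmS a N₀
    · -- small positions: use the deep points of blocks N₀ and N₀+1
      have ha0 := hlen N₀ le_rfl
      have ha1 := hlen (N₀+1) (Nat.le_succ _)
      have hS1 : ubmS a (N₀+1) = ubmS a N₀ + a N₀ := ubmS_succ a N₀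
      have hS2 : ubmS a (N₀+2) = ubmS a (N₀+1) + a (N₀+1) := ubmS_succ a (N₀+1)
      have hq0d2 : (ubmS a N₀ + L + 1) + (L + 1) ≤ ubmS a (N₀+1) := by omega
      have hq1d2 : (ubmS a (N₀+1) + L + 1) + (L + 1) ≤ ubmS a (N₀+2) := by omega
      have hb0 : ubmBlk a (ubmS a N₀ + L + 1) = N₀ := ubmBlk_eq a hpos (by omega) (by omega)
      have hb1 : ubmBlk a (ubmS a (N₀+1) + L + 1) = N₀ + 1 := ubmBlk_eq a hpos (by omega) (by have := ubmS_succ a (N₀+1); omega)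
      have hne : α (ubmS a N₀ + L + 1) ≠ α (ubmS a (N₀+1) + L + 1) := by
        rw [hcolor, hcolor, hb0, hb1]
        split_ifs with h1 h2 h2 <;> first | omega | decide
      have hmbd : m ≤ ubmS a (N₀ + 2) := le_trans hm.le (ubmS_mono a (by omega))
      have hmR : (m:ℝ) ≤ C := by
        have hh : (m:ℝ) ≤ ((ubmS a (N₀+2) : ℕ) : ℝ) := Nat.cast_le.2 hmbd
        rw [hCdef]; linarith
      rcases hfin2 (α (ubmS a N₀ + L + 1)) (α (ubmS a (N₀+1) + L + 1)) (α m) hne with hc | hc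
      · obtain ⟨x, hx⟩ := hsurj (ubmS a N₀ + L + 1)
        have hfb : f x ≤ ubmS a (N₀+2) + 2*L + 1 := by
          have := (hnear _ x hx).1; omega
        refine ⟨x, ?_, ?_⟩
        · rw [hcolor (f x), hdeep _ N₀ x le_rfl hq0d2 hx, ← hb0, ← hcolor, hc]
        · have hfR : (f x:ℝ) ≤ C := by
            have hh : (f x:ℝ) ≤ ((ubmS a (N₀+2) + 2*L + 1 : ℕ) : ℝ) := Nat.cast_le.2 hfb
            push_cast at hh; rw [hCdef]; linarith
          rw [abs_le]
          constructor
          · linarith [Nat.cast_nonneg (α := ℝ) (f x)]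
          · linarith [Nat.cast_nonneg (α := ℝ) m]
      · obtain ⟨x, hx⟩ := hsurj (ubmS a (N₀+1) + L + 1)
        have hfb : f x ≤ ubmS a (N₀+2) + 2*L + 1 := by
          have := (hnear _ x hx).1
          have := ubmS_mono a (show N₀ + 1 ≤ N₀ + 2 by omega)
          omega
        refine ⟨x, ?_, ?_⟩
        · rw [hcolor (f x), hdeep _ (N₀+1) x le_rfl hq1d2 hx, ← hb1, ← hcolor, hc]
        · have hfR : (f x:ℝ) ≤ C := by
            have hh : (f x:ℝ) ≤ ((ubmS a (N₀+2) + 2*L + 1 : ℕ) : ℝ) := Nat.cast_le.2 hfb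
            push_cast at hh; rw [hCdef]; linarith
          rw [abs_le]
          constructor
          · linarith [Nat.cast_nonneg (α := ℝ) (f x)]
          · linarith [Nat.cast_nonneg (α := ℝ) m]
    · -- large positions: m lies in a long block; move to a deep point of the same block
      push_neg at hm
      obtain ⟨hs1, hs2⟩ := ubmBlk_spec a hpos m
      set k : ℕ := ubmBlk a m with hk
      have hkN : N₀ ≤ k := by
        by_contra hcon
        push_neg at hcon
        have := ubmS_mono a (show k + 1 ≤ N₀ from hcon)
        omega
      have hak : 2*L + 3 < a k := hlen k hkN
      have hSk1 : ubmS a (k+1) = ubmS a k + a k := ubmS_succ a k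
      set m' : ℕ := min (max m (ubmS a k + L + 1)) (ubmS a k + (a k - (L+2))) with hm'
      have hm'1 : ubmS a k + L + 1 ≤ m' := by omega
      have hm'2 : m' + (L + 1) ≤ ubmS a (k+1) := by omega
      have hm'3 : m' ≤ m + (L+1) ∧ m ≤ m' + (L+1) := by omega
      obtain ⟨x, hx⟩ := hsurj m'
      refine ⟨x, ?_, ?_⟩
      · rw [hcolor (f x), hdeep m' k x hm'1 hm'2 hx, hk]
        exact (hcolor m).symm
      · have t1 : |(f x:ℝ) - (m:ℝ)| ≤ |(f x:ℝ) - (m':ℝ)| + |(m':ℝ) - (m:ℝ)| := abs_sub_le _ _ _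
        have t2 : |(f x:ℝ) - (m':ℝ)| = |(m':ℝ) - (f x:ℝ)| := abs_sub_comm _ _
        have t3 : |(m':ℝ) - (m:ℝ)| ≤ (L:ℝ) + 1 := by
          rw [abs_le]
          constructor
          · have hh : (m:ℝ) ≤ ((m' + (L+1) : ℕ) : ℝ) := Nat.cast_le.2 hm'3.2
            push_cast at hh; linarith
          · have hh : (m':ℝ) ≤ ((m + (L+1) : ℕ) : ℝ) := Nat.cast_le.2 hm'3.1
            push_cast at hh; linarith
        rw [hCdef]
        linarith [hx.trans hAL]
  -- build the coarse inverse g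
  choose g hg1 hg2 using hkey
  have hD0 : (0:ℝ) ≤ B + 2*C := by linarith
  have hA2 : (1:ℝ) ≤ A * A := by nlinarith
  have hAD0 : (0:ℝ) ≤ A * (B + 2*C) := mul_nonneg hApos.le hD0
  refine ⟨g, A*(B+2*C) + A, A*(B+2*C), ?_, ?_, ?_, ?_, ?_⟩
  · linarith
  · exact hAD0
  · intro n
    exact ((hcol (g n)).trans (hg1 n)).symm
  · intro x y
    obtain ⟨hflo, hfhi⟩ := hqi (g x) (g y)
    have hgx := hg2 x
    have hgy := hg2 y
    have habs1 : |(f (g x):ℝ) - (f (g y):ℝ)| ≤ |(x:ℝ) - (y:ℝ)| + 2*C := by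
      have t1 : |(f (g x):ℝ) - (f (g y):ℝ)| ≤ |(f (g x):ℝ) - (x:ℝ)| + |(x:ℝ) - (f (g y):ℝ)| :=
        abs_sub_le _ _ _
      have t2 : |(x:ℝ) - (f (g y):ℝ)| ≤ |(x:ℝ) - (y:ℝ)| + |(y:ℝ) - (f (g y):ℝ)| := abs_sub_le _ _ _
      have t3 : |(y:ℝ) - (f (g y):ℝ)| = |(f (g y):ℝ) - (y:ℝ)| := abs_sub_comm _ _
      linarith
    have habs2 : |(x:ℝ) - (y:ℝ)| ≤ |(f (g x):ℝ) - (f (g y):ℝ)| + 2*C := by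
      have t1 : |(x:ℝ) - (y:ℝ)| ≤ |(x:ℝ) - (f (g x):ℝ)| + |(f (g x):ℝ) - (y:ℝ)| := abs_sub_le _ _ _
      have t2 : |(f (g x):ℝ) - (y:ℝ)| ≤ |(f (g x):ℝ) - (f (g y):ℝ)| + |(f (g y):ℝ) - (y:ℝ)| :=
        abs_sub_le _ _ _
      have t3 : |(x:ℝ) - (f (g x):ℝ)| = |(f (g x):ℝ) - (x:ℝ)| := abs_sub_comm _ _
      linarith
    have hxy : |(x:ℝ) - (y:ℝ)| ≤ A * |(g x:ℝ) - (g y:ℝ)| + (B + 2*C) := by linarith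
    have hgu : |(g x:ℝ) - (g y:ℝ)| ≤ A * (|(x:ℝ) - (y:ℝ)| + 2*C + B) := by
      have h1 : (1/A) * |(g x:ℝ) - (g y:ℝ)| ≤ |(x:ℝ) - (y:ℝ)| + 2*C + B := by linarith
      have h2 := mul_le_mul_of_nonneg_left h1 hApos.le
      rw [← mul_assoc, mul_one_div_cancel hApos.ne', one_mul] at h2
      exact h2
    constructor
    · -- lower bound
      have hA'pos : (0:ℝ) < A*(B+2*C) + A := by linarith
      have key : (1/(A*(B+2*C)+A)) * |(x:ℝ) - (y:ℝ)| ≤ |(g x:ℝ) - (g y:ℝ)| + A*(B+2*C) := by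
        rw [one_div, inv_mul_le_iff₀ hA'pos]
        have h7 : B + 2*C ≤ A*A*(B+2*C) := le_mul_of_one_le_left hD0 hA2
        nlinarith [mul_nonneg hAD0 (abs_nonneg ((g x:ℝ) - (g y:ℝ))),
          sq_nonneg (A*(B+2*C)), mul_nonneg hApos.le (abs_nonneg ((g x:ℝ) - (g y:ℝ)))]
      linarith
    · -- upper bound
      nlinarith [mul_nonneg hAD0 (abs_nonneg ((x:ℝ) - (y:ℝ)))]
  · intro n
    refine ⟨f n, ?_⟩
    have h1 := hg2 (f n)
    have h2 := (hqi (g (f n)) n).1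
    have h4 : (1/A) * |(g (f n):ℝ) - (n:ℝ)| ≤ B + C := by linarith
    have h5 := mul_le_mul_of_nonneg_left h4 hApos.le
    rw [← mul_assoc, mul_one_div_cancel hApos.ne', one_mul] at h5
    have h6 : |(n:ℝ) - (g (f n):ℝ)| = |(g (f n):ℝ) - (n:ℝ)| := abs_sub_comm _ _
    rw [h6]
    nlinarith [mul_nonneg hApos.le hC0]
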